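/- Let (G, p) be a finite critical net in ℝ^k satisfying the balance condition. If G has at least one edge, then G has at least two leaves: |∂X| ≥ 2. -/

import Mathlib

open scoped RealInnerProductSpace

lemma exists_generic_dir {k : ℕ} {V : Type*} [Fintype V] [DecidableEq V]
    (p : V → EuclideanSpace ℝ (Fin k)) (hinj : Function.Injective p) :
    ∃ u : EuclideanSpace ℝ (Fin k), ∀ x y : V, x ≠ y → ⟪p x - p y, u⟫ ≠ 0 := by
  classical
  by_contra h
  push_neg at h
  have hcov : ⋃ q : {q : V × V // q.1 ≠ q.2},
      ((LinearMap.ker (innerSL ℝ (p q.1.1 - p q.1.2) : EuclideanSpace ℝ (Fin k) →ₗ[ℝ] ℝ) : Subspace ℝ (EuclideanSpace ℝ (Fin k))) :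
        Set (EuclideanSpace ℝ (Fin k))) = Set.univ := by
    ext u
    simp only [Set.mem_iUnion, Set.mem_univ, iff_true, SetLike.mem_coe,
      LinearMap.mem_ker]
    obtain ⟨x, y, hxy, hu⟩ := h u
    exact ⟨⟨(x, y), hxy⟩, hu⟩
  obtain ⟨⟨⟨x, y⟩, hxy⟩, htop⟩ := Subspace.exists_eq_top_of_iUnion_eq_univ hcov
  have : ⟪p x - p y, p x - p y⟫ = 0 := by
    have := LinearMap.ker_eq_top.mp htop
    have := DFunLike.congr_fun this (p x - p y)
    simpa only [ContinuousLinearMap.coe_coe, innerSL_apply_apply, LinearMap.zero_apply, ContinuousLinearMap.zero_apply] using this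
  have : p x - p y = 0 := by
    simpa using (inner_self_eq_zero (𝕜 := ℝ)).mp this
  exact hxy (hinj (sub_eq_zero.mp this))

/-- A finite critical net in `ℝ^k` satisfying the balance condition
and having at least one edge has at least two leaves. -/
theorem two_le_card_leaves
    {k : ℕ} (hk : 1 ≤ k) {V : Type*} [Fintype V] [DecidableEq V]
    (G : SimpleGraph V) [DecidableRel G.Adj]
    (p : V → EuclideanSpace ℝ (Fin k)) (hinj : Function.Injective p)
    (hdeg1 : ∀ x : V, 1 ≤ G.degree x)
    (hnoLL : ∀ x y : V, G.Adj x y → ¬(G.degree x = 1 ∧ G.degree y = 1))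
    (hbal : ∀ x : V, 2 ≤ G.degree x →
      ∑ y ∈ G.neighborFinset x, (‖p x - p y‖)⁻¹ • (p x - p y) = 0)
    (hedge : ∃ x y : V, G.Adj x y) :
    2 ≤ (Finset.univ.filter fun l : V => G.degree l = 1).card := by
  classical
  obtain ⟨u, hu⟩ := exists_generic_dir p hinj
  set f : V → ℝ := fun x => ⟪p x, u⟫ with hf
  obtain ⟨x₀, y₀, hxy₀⟩ := hedge
  have hne : (Finset.univ : Finset V).Nonempty := ⟨x₀, Finset.mem_univ _⟩
  obtain ⟨a, -, ha⟩ := Finset.exists_max_image Finset.univ f hne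
  obtain ⟨b, -, hb⟩ := Finset.exists_min_image Finset.univ f hne
  have ha' : ∀ v, f v ≤ f a := fun v => ha v (Finset.mem_univ v)
  have hb' : ∀ v, f b ≤ f v := fun v => hb v (Finset.mem_univ v)
  -- key: any vertex maximizing (resp. minimizing) f is a leaf
  have key : ∀ (w : EuclideanSpace ℝ (Fin k)),
      (∀ x y : V, x ≠ y → ⟪p x - p y, w⟫ ≠ 0) →
      ∀ c : V, (∀ y ∈ G.neighborFinset c, 0 ≤ ⟪p c - p y, w⟫) →
      G.degree c = 1 := by
    intro w hw c hc
    by_contra hdeg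
    have h2 : 2 ≤ G.degree c := by
      have := hdeg1 c; omega
    have hsum := hbal c h2
    have hzero : ∑ y ∈ G.neighborFinset c, (‖p c - p y‖)⁻¹ * ⟪p c - p y, w⟫ = 0 := by
      have := congrArg (fun v => (⟪v, w⟫ : ℝ)) hsum
      simpa [sum_inner, inner_smul_left] using this
    have hpos : 0 < ∑ y ∈ G.neighborFinset c, (‖p c - p y‖)⁻¹ * ⟪p c - p y, w⟫ := by
      apply Finset.sum_pos
      · intro y hy
        have hyc : y ≠ c := (G.ne_of_adj (G.adj_symm ((G.mem_neighborFinset c y).mp hy)))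
        have hpne : p c - p y ≠ 0 := sub_ne_zero.mpr (fun h => hyc (hinj h).symm)
        have hinner : ⟪p c - p y, w⟫ ≠ 0 := hw c y hyc.symm
        have h1 : 0 < ⟪p c - p y, w⟫ := lt_of_le_of_ne (hc y hy) (Ne.symm hinner)
        have h2' : 0 < (‖p c - p y‖)⁻¹ := inv_pos.mpr (norm_pos_iff.mpr hpne)
        exact mul_pos h2' h1
      · rw [← Finset.card_pos, G.card_neighborFinset_eq_degree]; omega
    exact hpos.ne' hzero
  have hafb : f b < f a := by
    have hx0y0 : x₀ ≠ y₀ := G.ne_of_adj hxy₀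
    have : f x₀ ≠ f y₀ := by
      intro h
      refine hu x₀ y₀ hx0y0 ?_
      rw [inner_sub_left, show (⟪p x₀, u⟫ : ℝ) = f x₀ from rfl,
        show (⟪p y₀, u⟫ : ℝ) = f y₀ from rfl, h, sub_self]
    rcases lt_or_gt_of_ne this with h | h
    · exact lt_of_le_of_lt (hb' x₀) (lt_of_lt_of_le h (ha' y₀))
    · exact lt_of_le_of_lt (hb' y₀) (lt_of_lt_of_le h (ha' x₀))
  have hab : a ≠ b := fun h => absurd (h ▸ hafb) (lt_irrefl _)
  have hleafa : G.degree a = 1 := by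
    apply key u hu
    intro y _
    have : f y ≤ f a := ha' y
    simpa [hf, inner_sub_left] using sub_nonneg.mpr this
  have hleafb : G.degree b = 1 := by
    apply key (-u) (fun x y hxy => by
      simpa [inner_neg_right] using hu x y hxy)
    intro y _
    have : f b ≤ f y := hb' y
    have h1 : ⟪p b - p y, u⟫ ≤ 0 := by
      simpa [hf, inner_sub_left] using sub_nonpos.mpr this
    simpa [inner_neg_right] using neg_nonneg.mpr h1
  refine Finset.one_lt_card.mpr ⟨a, ?_, b, ?_, hab⟩ <;>
    simp [hleafa, hleafb]
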